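/- arXiv:math/9906056 — 2 statements merged into one kernel-verified Lean document; each statement's English description precedes it below -/
import Mathlib

section
/- Let m ≥ 0 and n ≥ 1 be integers and let s ≥ n be a real number. If E ⊆ ℝ^m × ℝ^n satisfies H^s(E) = 0, where H^s is computed with respect to the Euclidean metric on ℝ^{m+n}, then for Lebesgue-almost every y ∈ ℝ^n the slice E_y = { x ∈ ℝ^m : (x, y) ∈ E } satisfies H^{s-n}(E_y) = 0. -/
open MeasureTheory

open scoped ENNReal

noncomputable section SliceAux

/-- Hausdorff pre-measure at scale `r`. -/
def preH {X : Type*} [EMetricSpace X] (t : ℝ) (r : ℝ≥0∞) (A : Set X) : ℝ≥0∞ :=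
  ⨅ (c : ℕ → Set X) (_ : A ⊆ ⋃ i, c i) (_ : ∀ i, EMetric.diam (c i) ≤ r),
    ∑' i, ⨆ _ : (c i).Nonempty, EMetric.diam (c i) ^ t

lemma hausdorff_eq_iSup_preH {X : Type*} [EMetricSpace X] [MeasurableSpace X] [BorelSpace X]
    (t : ℝ) (A : Set X) :
    μH[t] A = ⨆ (r : ℝ≥0∞) (_ : 0 < r), preH t r A :=
  MeasureTheory.Measure.hausdorffMeasure_apply t A

lemma preH_anti {X : Type*} [EMetricSpace X] (t : ℝ) {r r' : ℝ≥0∞} (h : r ≤ r') (A : Set X) :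
    preH t r' A ≤ preH t r A := by
  refine le_iInf fun c => le_iInf fun hc => le_iInf fun hd => ?_
  exact iInf_le_of_le c (iInf_le_of_le hc (iInf_le_of_le (fun i => (hd i).trans h) le_rfl))

lemma preH_le {X : Type*} [EMetricSpace X] (t : ℝ) (r : ℝ≥0∞) (A : Set X)
    (c : ℕ → Set X) (hc : A ⊆ ⋃ i, c i) (hd : ∀ i, EMetric.diam (c i) ≤ r) :
    preH t r A ≤ ∑' i, ⨆ _ : (c i).Nonempty, EMetric.diam (c i) ^ t :=
  iInf_le_of_le c (iInf_le_of_le hc (iInf_le_of_le hd le_rfl))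

/-- `Fin.append` as a map into `EuclideanSpace`, to pin down the `PiLp` instances. -/
def app (m n : ℕ) (x : EuclideanSpace ℝ (Fin m)) (y : EuclideanSpace ℝ (Fin n)) :
    EuclideanSpace ℝ (Fin (m + n)) :=
  WithLp.toLp 2 (Fin.append x y)

lemma sq_dist_app (m n : ℕ) (x x' : EuclideanSpace ℝ (Fin m))
    (y y' : EuclideanSpace ℝ (Fin n)) :
    dist (app m n x y) (app m n x' y') ^ 2 = dist x x' ^ 2 + dist y y' ^ 2 := by
  rw [EuclideanSpace.dist_eq (app m n x y) (app m n x' y'),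
    EuclideanSpace.dist_eq x x', EuclideanSpace.dist_eq y y',
    Real.sq_sqrt (by positivity), Real.sq_sqrt (by positivity), Real.sq_sqrt (by positivity),
    Fin.sum_univ_add]
  congr 1 <;> apply Finset.sum_congr rfl <;> intro i _ <;>
    simp [app, Fin.append_left, Fin.append_right]

lemma dist_right_le (m n : ℕ) (x x' : EuclideanSpace ℝ (Fin m))
    (y y' : EuclideanSpace ℝ (Fin n)) :
    dist y y' ≤ dist (app m n x y) (app m n x' y') := by
  have h := sq_dist_app m n x x' y y'
  have h1 : dist y y' ^ 2 ≤ dist (app m n x y) (app m n x' y') ^ 2 := by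
    rw [h]; nlinarith [dist_nonneg (x := x) (y := x')]
  calc dist y y' = Real.sqrt (dist y y' ^ 2) := (Real.sqrt_sq dist_nonneg).symm
    _ ≤ Real.sqrt (dist (app m n x y) (app m n x' y') ^ 2) := Real.sqrt_le_sqrt h1
    _ = _ := Real.sqrt_sq dist_nonneg

lemma isometry_app (m n : ℕ) (y : EuclideanSpace ℝ (Fin n)) :
    Isometry (fun x : EuclideanSpace ℝ (Fin m) => app m n x y) := by
  refine Isometry.of_dist_eq fun x x' => ?_
  have h := sq_dist_app m n x x' y y
  simp only [dist_self] at h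
  calc dist (app m n x y) (app m n x' y)
      = Real.sqrt (dist (app m n x y) (app m n x' y) ^ 2) := (Real.sqrt_sq dist_nonneg).symm
    _ = Real.sqrt (dist x x' ^ 2) := by rw [h]; ring_nf
    _ = dist x x' := Real.sqrt_sq dist_nonneg

lemma edist_right_le (m n : ℕ) (x x' : EuclideanSpace ℝ (Fin m))
    (y y' : EuclideanSpace ℝ (Fin n)) :
    edist y y' ≤ edist (app m n x y) (app m n x' y') := by
  rw [edist_dist, edist_dist]
  exact ENNReal.ofReal_le_ofReal (dist_right_le m n x x' y y')

/-- Diameter of a slice is at most the diameter of the set. -/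
lemma diam_slice_le (m n : ℕ) (U : Set (EuclideanSpace ℝ (Fin (m + n))))
    (y : EuclideanSpace ℝ (Fin n)) :
    EMetric.diam {x : EuclideanSpace ℝ (Fin m) | app m n x y ∈ U} ≤ EMetric.diam U := by
  show Metric.ediam _ ≤ Metric.ediam _; rw [← (isometry_app m n y).ediam_image]
  apply EMetric.diam_mono
  rintro _ ⟨x, hx, rfl⟩
  exact hx

/-- Key estimate: for fixed scale `r` and level `a`, the set of `y` whose slice has
`preH (s-n) r` bigger than `a` is Lebesgue-null. -/
lemma slice_level_null (m n : ℕ) (s : ℝ) (hs : (n : ℝ) ≤ s)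
    (E : Set (EuclideanSpace ℝ (Fin (m + n)))) (hE : μH[s] E = 0)
    (r : ℝ≥0∞) (hr : 0 < r) (a : ℝ≥0∞) (ha : a ≠ 0) (ha' : a ≠ ∞) :
    volume {y : EuclideanSpace ℝ (Fin n) |
      a < preH (s - n) r {x : EuclideanSpace ℝ (Fin m) | app m n x y ∈ E}} = 0 := by
  classical
  set C := volume (Metric.closedBall (0 : EuclideanSpace ℝ (Fin n)) 1) with hCdef
  have hC : C ≠ ∞ := measure_closedBall_lt_top.ne
  refine le_antisymm ?_ zero_le
  refine ENNReal.le_of_forall_pos_le_add fun ε hε _ => ?_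
  rw [zero_add]
  set δ : ℝ≥0∞ := a * ε / (C + 1) with hδdef
  have hδ : 0 < δ := ENNReal.div_pos (by
      simp only [ne_eq, mul_eq_zero, not_or]
      exact ⟨ha, by exact_mod_cast hε.ne'⟩)
    (by simp [hC])
  -- extract a good cover of E
  set r' := min r 1 with hr'def
  have hr' : 0 < r' := lt_min hr zero_lt_one
  have h0 : preH s r' E = 0 := by
    refine le_antisymm ?_ zero_le
    rw [← hE, hausdorff_eq_iSup_preH]
    exact le_iSup₂ (f := fun (q : ℝ≥0∞) (_ : 0 < q) => preH s q E) r' hr'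
  have hlt : preH s r' E < δ := h0 ▸ hδ
  rw [preH] at hlt
  rw [iInf_lt_iff] at hlt
  obtain ⟨c, hlt⟩ := hlt
  rw [iInf_lt_iff] at hlt
  obtain ⟨hc, hlt⟩ := hlt
  rw [iInf_lt_iff] at hlt
  obtain ⟨hdle, hlt⟩ := hlt
  -- diameters
  set d : ℕ → ℝ≥0∞ := fun i => EMetric.diam (c i) with hddef
  have hdne : ∀ i, d i ≠ ∞ := fun i =>
    ((hdle i).trans_lt ((min_le_right r 1).trans_lt ENNReal.one_lt_top)).ne
  -- projections and covering balls
  set P : ℕ → Set (EuclideanSpace ℝ (Fin n)) :=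
    fun i => {y | ∃ x : EuclideanSpace ℝ (Fin m), app m n x y ∈ c i} with hPdef
  set B : ℕ → Set (EuclideanSpace ℝ (Fin n)) := fun i =>
    if h : (P i).Nonempty then Metric.closedBall h.choose (d i).toReal else ∅ with hBdef
  have hBmeas : ∀ i, MeasurableSet (B i) := by
    intro i
    by_cases h : (P i).Nonempty
    · simp only [hBdef, dif_pos h]
      exact measurableSet_closedBall
    · simp only [hBdef, dif_neg h]
      exact MeasurableSet.empty
  set g : EuclideanSpace ℝ (Fin n) → ℝ≥0∞ := fun y =>
    ∑' i, Set.indicator (B i) (fun _ => d i ^ (s - n)) y with hgdef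
  have hgmeas : Measurable g :=
    Measurable.ennreal_tsum fun i => Measurable.indicator measurable_const (hBmeas i)
  -- pointwise bound: preH of the slice is at most g
  have hpoint : ∀ y : EuclideanSpace ℝ (Fin n),
      preH (s - n) r {x : EuclideanSpace ℝ (Fin m) | app m n x y ∈ E} ≤ g y := by
    intro y
    set sl : ℕ → Set (EuclideanSpace ℝ (Fin m)) := fun i =>
      {x | app m n x y ∈ c i} with hsldef
    have hcov : {x : EuclideanSpace ℝ (Fin m) | app m n x y ∈ E} ⊆ ⋃ i, sl i := by
      intro x hx
      obtain ⟨_, ⟨i, rfl⟩, hi⟩ := hc hx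
      exact Set.mem_iUnion.2 ⟨i, hi⟩
    have hdiam : ∀ i, EMetric.diam (sl i) ≤ r := fun i =>
      ((diam_slice_le m n (c i) y).trans (hdle i)).trans (min_le_left r 1)
    refine (preH_le _ _ _ sl hcov hdiam).trans (ENNReal.tsum_le_tsum fun i => ?_)
    by_cases hne : (sl i).Nonempty
    · rw [iSup_pos hne]
      have hPne : (P i).Nonempty := by
        obtain ⟨x, hx⟩ := hne
        exact ⟨y, x, hx⟩
      have hyB : y ∈ B i := by
        simp only [hBdef, dif_pos hPne]
        obtain ⟨x, hx⟩ := hne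
        obtain ⟨x', hx'⟩ := hPne.choose_spec
        have hed : edist y hPne.choose ≤ d i :=
          (edist_right_le m n x x' y hPne.choose).trans
            (EMetric.edist_le_diam_of_mem (s := c i)
              (show app m n x y ∈ c i from hx) hx')
        rw [Metric.mem_closedBall, dist_edist]
        exact ENNReal.toReal_mono (hdne i) hed
      have : EMetric.diam (sl i) ^ (s - n) ≤ d i ^ (s - n) :=
        ENNReal.rpow_le_rpow (diam_slice_le m n (c i) y) (by linarith)
      rw [Set.indicator_of_mem hyB]
      exact this
    · rw [Set.not_nonempty_iff_eq_empty] at hne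
      simp [hne]
  -- integral bound
  have hint : ∫⁻ y, g y ≤ δ * C := by
    rw [hgdef]
    rw [lintegral_tsum fun i => (Measurable.indicator measurable_const (hBmeas i)).aemeasurable]
    have hterm : ∀ i, ∫⁻ y, Set.indicator (B i) (fun _ => d i ^ (s - n)) y
        ≤ (⨆ _ : (c i).Nonempty, d i ^ s) * C := by
      intro i
      rw [lintegral_indicator_const (hBmeas i)]
      by_cases hPne : (P i).Nonempty
      · have hcne : (c i).Nonempty := by
          obtain ⟨y₀, x₀, hx₀⟩ := hPne
          exact ⟨_, hx₀⟩
        have hBvol : volume (B i) ≤ d i ^ n * C := by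
          simp only [hBdef, dif_pos hPne]
          rw [Measure.addHaar_closedBall _ _ ENNReal.toReal_nonneg]
          have h1 : ENNReal.ofReal ((d i).toReal ^ Module.finrank ℝ (EuclideanSpace ℝ (Fin n)))
              = d i ^ n := by
            rw [finrank_euclideanSpace_fin, ENNReal.ofReal_pow ENNReal.toReal_nonneg,
              ENNReal.ofReal_toReal (hdne i)]
          rw [h1]
          exact mul_le_mul_right (measure_mono Metric.ball_subset_closedBall) _
        calc d i ^ (s - n) * volume (B i) ≤ d i ^ (s - n) * (d i ^ n * C) :=
              mul_le_mul_right hBvol _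
          _ = (d i ^ (s - n) * d i ^ (n : ℝ)) * C := by rw [ENNReal.rpow_natCast]; ring
          _ = d i ^ s * C := by
              rw [← ENNReal.rpow_add_of_nonneg _ _ (by linarith) (Nat.cast_nonneg n),
                sub_add_cancel]
          _ = (⨆ _ : (c i).Nonempty, d i ^ s) * C := by rw [iSup_pos hcne]
      · have : B i = ∅ := by simp only [hBdef, dif_neg hPne]
        simp [this]
    calc ∑' i, ∫⁻ y, Set.indicator (B i) (fun _ => d i ^ (s - n)) y
        ≤ ∑' i, (⨆ _ : (c i).Nonempty, d i ^ s) * C := ENNReal.tsum_le_tsum hterm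
      _ = (∑' i, ⨆ _ : (c i).Nonempty, d i ^ s) * C := ENNReal.tsum_mul_right
      _ ≤ δ * C := mul_le_mul_left hlt.le _
  -- Markov
  have hsub : {y : EuclideanSpace ℝ (Fin n) |
      a < preH (s - n) r {x : EuclideanSpace ℝ (Fin m) | app m n x y ∈ E}} ⊆ {y | a ≤ g y} :=
    fun y hy => ((Set.mem_setOf_eq ▸ hy).le.trans (hpoint y))
  calc volume {y : EuclideanSpace ℝ (Fin n) |
        a < preH (s - n) r {x : EuclideanSpace ℝ (Fin m) | app m n x y ∈ E}}
      ≤ volume {y | a ≤ g y} := measure_mono hsub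
    _ ≤ (∫⁻ y, g y) / a := meas_ge_le_lintegral_div hgmeas.aemeasurable ha ha'
    _ ≤ δ * C / a := ENNReal.div_le_div_right hint a
    _ ≤ δ * (C + 1) / a := ENNReal.div_le_div_right
        (mul_le_mul_right (le_self_add) _) a
    _ = a * ε / a := by rw [hδdef, ENNReal.div_mul_cancel (by simp) (by simp [hC])]
    _ ≤ ε := (ENNReal.div_le_iff ha ha').2 (le_of_eq (mul_comm a ε))

end SliceAux

/- Slicing of Hausdorff-null sets (Lemma 2.1 of the paper in local foliated
coordinates): if `E ⊆ ℝ^m × ℝ^n ≅ ℝ^(m+n)` has `H^s(E) = 0` (Euclidean Hausdorff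
measure, `s ≥ n`), then for Lebesgue-a.e. `y ∈ ℝ^n` the slice
`E_y = {x : (x, y) ∈ E}` satisfies `H^(s-n)(E_y) = 0`. -/
theorem stmt_1 (m n : ℕ) (hn : 1 ≤ n) (s : ℝ) (hs : (n : ℝ) ≤ s)
    (E : Set (EuclideanSpace ℝ (Fin (m + n))))
    (hE : μH[s] E = 0) :
    ∀ᵐ y : EuclideanSpace ℝ (Fin n) ∂volume,
      μH[s - n] {x : EuclideanSpace ℝ (Fin m) |
        (WithLp.toLp 2 (Fin.append x y) : EuclideanSpace ℝ (Fin (m + n))) ∈ E} = 0 := by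
  have hset : ∀ y : EuclideanSpace ℝ (Fin n),
      {x : EuclideanSpace ℝ (Fin m) |
        (WithLp.toLp 2 (Fin.append x y) : EuclideanSpace ℝ (Fin (m + n))) ∈ E}
      = {x : EuclideanSpace ℝ (Fin m) | app m n x y ∈ E} := fun y => rfl
  simp only [hset]
  rw [MeasureTheory.ae_iff]
  have hsub : {y : EuclideanSpace ℝ (Fin n) |
      ¬ μH[s - n] {x : EuclideanSpace ℝ (Fin m) | app m n x y ∈ E} = 0}
      ⊆ ⋃ (k : ℕ) (l : ℕ), {y : EuclideanSpace ℝ (Fin n) |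
        ((l : ℝ≥0∞) + 1)⁻¹ < preH (s - n) ((k : ℝ≥0∞))⁻¹
          {x : EuclideanSpace ℝ (Fin m) | app m n x y ∈ E}} := by
    intro y hy
    simp only [Set.mem_setOf_eq] at hy
    rw [hausdorff_eq_iSup_preH] at hy
    have h1 : 0 < ⨆ (r : ℝ≥0∞) (_ : 0 < r), preH (s - n) r
        {x : EuclideanSpace ℝ (Fin m) | app m n x y ∈ E} := pos_iff_ne_zero.2 hy
    rw [lt_iSup_iff] at h1
    obtain ⟨r, h1⟩ := h1
    rw [lt_iSup_iff] at h1
    obtain ⟨hrpos, h1⟩ := h1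
    obtain ⟨k, hk⟩ := ENNReal.exists_inv_nat_lt hrpos.ne'
    have h2 : 0 < preH (s - n) ((k : ℝ≥0∞))⁻¹
        {x : EuclideanSpace ℝ (Fin m) | app m n x y ∈ E} :=
      h1.trans_le (preH_anti _ hk.le _)
    obtain ⟨l, hl⟩ := ENNReal.exists_inv_nat_lt h2.ne'
    have hl' : ((l : ℝ≥0∞) + 1)⁻¹ < preH (s - n) ((k : ℝ≥0∞))⁻¹
        {x : EuclideanSpace ℝ (Fin m) | app m n x y ∈ E} :=
      lt_of_le_of_lt (ENNReal.inv_le_inv.2 le_self_add) hl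
    exact Set.mem_iUnion.2 ⟨k, Set.mem_iUnion.2 ⟨l, hl'⟩⟩
  refine measure_mono_null hsub ?_
  refine measure_iUnion_null fun k => measure_iUnion_null fun l => ?_
  refine slice_level_null m n s hs E hE _ (by simp) _ ?_ ?_
  · simp
  · exact ENNReal.inv_ne_top.2 (by simp)
end

section
/- Let N ≥ 1, let D ⊆ ℂ^N be open, and let E ⊆ D be closed in D with H^{2N-2}(E) = 0, the Hausdorff measure computed with respect to the Euclidean metric on ℂ^N ≅ ℝ^{2N}. Then every function f holomorphic on D \ E extends holomorphically to D: there exists g holomorphic on D with g = f on D \ E. -/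
open MeasureTheory

noncomputable instance (n : ℕ) : MeasurableSpace (EuclideanSpace ℂ (Fin n)) := borel _
instance (n : ℕ) : BorelSpace (EuclideanSpace ℂ (Fin n)) := ⟨rfl⟩

open Metric Set Filter Module Real
open scoped Topology ENNReal NNReal

/-- A set of zero `d`-Hausdorff measure with `d ≤ 2n` has empty interior in `ℂⁿ`. -/
lemma shiff_interior_empty {n : ℕ} {d : ℝ} (hd : d ≤ 2 * n)
    {B : Set (EuclideanSpace ℂ (Fin n))} (hB : μH[d] B = 0) :
    interior B = ∅ := by
  by_contra h
  obtain ⟨x, hx⟩ := Set.nonempty_iff_ne_empty.2 h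
  have hfr : (finrank ℝ (EuclideanSpace ℂ (Fin n)) : ℝ) = 2 * n := by
    have h1 : finrank ℝ ℂ * finrank ℂ (EuclideanSpace ℂ (Fin n))
        = finrank ℝ (EuclideanSpace ℂ (Fin n)) :=
      Module.finrank_mul_finrank ℝ ℂ _
    rw [Complex.finrank_real_complex, finrank_euclideanSpace, Fintype.card_fin] at h1
    rw [← h1]; push_cast; ring
  have h1 : μH[(finrank ℝ (EuclideanSpace ℂ (Fin n)) : ℝ)] B = 0 := by
    refine le_antisymm ?_ zero_le
    rw [← hB]
    exact Measure.hausdorffMeasure_mono (by rw [hfr]; exact hd) B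
  have hpos : 0 < μH[(finrank ℝ (EuclideanSpace ℂ (Fin n)) : ℝ)] (interior B) :=
    (isOpen_interior.measure_pos _ ⟨x, hx⟩)
  exact hpos.ne' (measure_mono_null interior_subset h1)

/-- The image of a Hausdorff-null set under a locally Lipschitz map is null. -/
lemma shiff_image_null {X Y : Type*} [MetricSpace X] [MeasurableSpace X] [BorelSpace X]
    [SecondCountableTopology X] [MetricSpace Y] [MeasurableSpace Y] [BorelSpace Y]
    {d : ℝ} (hd : 0 ≤ d) (g : X → Y) {A : Set X}
    (hg : ∀ a ∈ A, ∃ K : ℝ≥0, ∃ U ∈ 𝓝 a, LipschitzOnWith K g U)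
    (hA : μH[d] A = 0) : μH[d] (g '' A) = 0 := by
  choose K U hU hL using hg
  classical
  set V : X → Set X := fun a => if h : a ∈ A then U a h else Set.univ with hV
  have hVmem : ∀ x ∈ A, V x ∈ 𝓝[A] x := by
    intro x hx
    rw [hV]; simp only [dif_pos hx]
    exact nhdsWithin_le_nhds (hU x hx)
  obtain ⟨t, htA, htc, htcov⟩ := TopologicalSpace.countable_cover_nhdsWithin hVmem
  have himg : g '' A ⊆ ⋃ x ∈ t, g '' (V x ∩ A) := by
    rintro _ ⟨a, ha, rfl⟩
    obtain ⟨x, hxt, hax⟩ := Set.mem_iUnion₂.1 (htcov ha)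
    exact Set.mem_iUnion₂.2 ⟨x, hxt, Set.mem_image_of_mem g ⟨hax, ha⟩⟩
  refine le_antisymm (le_trans (measure_mono himg) ?_) zero_le
  refine le_of_eq ((measure_biUnion_null_iff htc).2 ?_)
  intro x hxt
  have hxA : x ∈ A := htA hxt
  have hlip : LipschitzOnWith (K x hxA) g (V x ∩ A) := by
    refine (hL x hxA).mono ?_
    rw [hV]; simp only [dif_pos hxA]; exact Set.inter_subset_left
  refine le_antisymm ?_ zero_le
  calc μH[d] (g '' (V x ∩ A)) ≤ (K x hxA : ℝ≥0∞) ^ d * μH[d] (V x ∩ A) :=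
        hlip.hausdorffMeasure_image_le hd
    _ ≤ (K x hxA : ℝ≥0∞) ^ d * 0 := by
        exact mul_le_mul_right (le_of_eq (measure_mono_null Set.inter_subset_right hA)) _
    _ = 0 := mul_zero _

/-- Cauchy estimate: bound on the full Fréchet derivative of a holomorphic function. -/
lemma shiff_fderiv_bound {Z : Type*} [NormedAddCommGroup Z] [NormedSpace ℂ Z]
    {f : Z → ℂ} {O : Set Z} (hO : IsOpen O) (hf : DifferentiableOn ℂ f O)
    {x : Z} {ρ M : ℝ} (hρ : 0 < ρ) (hball : closedBall x ρ ⊆ O)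
    (hM : ∀ z ∈ closedBall x ρ, ‖f z‖ ≤ M) : ‖fderiv ℂ f x‖ ≤ M / ρ := by
  have hM0 : 0 ≤ M := le_trans (norm_nonneg _) (hM x (mem_closedBall_self hρ.le))
  refine ContinuousLinearMap.opNorm_le_bound _ (div_nonneg hM0 hρ.le) (fun v => ?_)
  rcases eq_or_ne v 0 with rfl | hv
  · simp
  have hv0 : (0:ℝ) < ‖v‖ := norm_pos_iff.2 hv
  set R : ℝ := ρ / ‖v‖ with hRdef
  have hR : 0 < R := div_pos hρ hv0
  set g : ℂ → ℂ := fun z => f (x + z • v) with hg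
  have hmem : ∀ z : ℂ, z ∈ closedBall (0:ℂ) R → x + z • v ∈ closedBall x ρ := by
    intro z hz
    rw [mem_closedBall, dist_self_add_left, norm_smul]
    rw [mem_closedBall, dist_zero_right] at hz
    calc ‖z‖ * ‖v‖ ≤ R * ‖v‖ := by gcongr
      _ = ρ := by rw [hRdef]; field_simp
  have haff : Differentiable ℂ (fun z : ℂ => x + z • v) :=
    (differentiable_id.smul_const v).const_add x
  have hgd : DifferentiableOn ℂ g (ball (0:ℂ) R) := by
    intro z hz
    have hzO : x + z • v ∈ O := hball (hmem z (ball_subset_closedBall hz))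
    exact ((hf.differentiableAt (hO.mem_nhds hzO)).comp z (haff z)).differentiableWithinAt
  have hgc : ContinuousOn g (closedBall (0:ℂ) R) := by
    refine (hf.continuousOn.comp (haff.continuous.continuousOn) ?_)
    intro z hz; exact hball (hmem z hz)
  have hDCC : DiffContOnCl ℂ g (ball (0:ℂ) R) :=
    ⟨hgd, by rwa [closure_ball (0:ℂ) hR.ne']⟩
  have hsph : ∀ z ∈ sphere (0:ℂ) R, ‖g z‖ ≤ M := by
    intro z hz
    exact hM _ (hmem z (sphere_subset_closedBall hz))
  have hbd := Complex.norm_deriv_le_of_forall_mem_sphere_norm_le hR hDCC hsph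
  have hDA : HasDerivAt (fun z : ℂ => x + z • v) v 0 := by
    simpa using ((hasDerivAt_id (0:ℂ)).smul_const v).const_add x
  have hxO : x ∈ O := hball (mem_closedBall_self hρ.le)
  have hfd := (hf.differentiableAt (hO.mem_nhds hxO)).hasFDerivAt
  have hgderiv : HasDerivAt g (fderiv ℂ f x v) 0 := by
    have hfd' : HasFDerivAt f (fderiv ℂ f x) (x + (0:ℂ) • v) := by simpa using hfd
    exact hfd'.comp_hasDerivAt 0 hDA
  rw [hgderiv.deriv] at hbd
  calc ‖fderiv ℂ f x v‖ ≤ M / R := hbd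
    _ = M / ρ * ‖v‖ := by rw [hRdef, div_div_eq_mul_div, div_mul_eq_mul_div]

/-- A family of continuous linear maps on a finite-dimensional space which is
measurable in each evaluation is strongly measurable. -/
lemma shiff_clm_measurable {Z : Type*} [NormedAddCommGroup Z] [NormedSpace ℂ Z]
    [FiniteDimensional ℂ Z] (u : ℝ → Z →L[ℂ] ℂ)
    (h : ∀ v : Z, Measurable fun θ => u θ v) : StronglyMeasurable u := by
  classical
  set b := Module.finBasis ℂ Z with hb
  set c : Fin (Module.finrank ℂ Z) → (Z →L[ℂ] ℂ) :=
    fun j => LinearMap.toContinuousLinearMap (b.coord j) with hc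
  have hrepr : u = fun θ => ∑ j, ContinuousLinearMap.smulRightL ℂ Z ℂ (c j) (u θ (b j)) := by
    funext θ
    ext v
    have hRHS : ∀ j, (ContinuousLinearMap.smulRightL ℂ Z ℂ (c j) (u θ (b j))) v
        = b.repr v j • u θ (b j) := by
      intro j
      show ((c j).smulRight (u θ (b j))) v = _
      simp [hc, ContinuousLinearMap.smulRight_apply]
    rw [ContinuousLinearMap.sum_apply]
    simp only [hRHS]
    have hv : (∑ j, b.repr v j • b j) = v := b.sum_repr v
    conv_lhs => rw [← hv]
    rw [map_sum]
    refine Finset.sum_congr rfl (fun j _ => ?_)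
    rw [_root_.map_smul]
  rw [hrepr]
  refine Finset.stronglyMeasurable_fun_sum _ (fun j _ => ?_)
  exact ((ContinuousLinearMap.smulRightL ℂ Z ℂ (c j)).continuous).comp_stronglyMeasurable
    ((h (b j)).stronglyMeasurable)

section Core

variable {Z' : Type*} [NormedAddCommGroup Z'] [NormedSpace ℂ Z'] [FiniteDimensional ℂ Z']

/-- Core construction: the Cauchy transform in the last variable gives a holomorphic
function on a polydisc, agreeing with `F` on fibers staying inside `W`. -/
lemma shiff_core {F : Z' × ℂ → ℂ} {W : Set (Z' × ℂ)} (hW : IsOpen W)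
    (hF : DifferentiableOn ℂ F W) {r δ : ℝ} (hr : 0 < r) (hδ : 0 < δ)
    (htube : ∀ z' : Z', ∀ w : ℂ, ‖z'‖ < δ → ‖w‖ = r → (z', w) ∈ W) :
    ∃ G : Z' × ℂ → ℂ,
      DifferentiableOn ℂ G (ball (0:Z') (δ/2) ×ˢ ball (0:ℂ) (r/2)) ∧
      ∀ y : Z' × ℂ, y ∈ ball (0:Z') (δ/2) ×ˢ ball (0:ℂ) (r/2) →
        (∀ w : ℂ, ‖w‖ ≤ r → (y.1, w) ∈ W) → G y = F y := by
  classical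
  -- the integrand as a function of the parameter `x` and the angle `θ`
  set Fint : Z' × ℂ → ℝ → ℂ := fun x θ =>
    deriv (circleMap 0 r) θ • ((circleMap 0 r θ - x.2)⁻¹ • F (x.1, circleMap 0 r θ)) with hFint
  set μ : Measure ℝ := volume.restrict (Set.Ioc (0:ℝ) (2*π)) with hμ
  haveI : IsFiniteMeasure μ := ⟨by
    rw [hμ, Measure.restrict_apply_univ]; exact measure_Ioc_lt_top⟩
  set G : Z' × ℂ → ℂ := fun y =>
    (2 * π * Complex.I : ℂ)⁻¹ • ∮ w in C(0, r), (w - y.2)⁻¹ • F (y.1, w) with hG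
  have habsw : ∀ θ : ℝ, ‖circleMap 0 r θ‖ = r := by
    intro θ
    simpa [abs_of_pos hr] using abs_circleMap_zero r θ
  -- compact torus bound
  obtain ⟨M, hM⟩ : ∃ M, ∀ x ∈ (closedBall (0:Z') (3*δ/4)) ×ˢ (sphere (0:ℂ) r), ‖F x‖ ≤ M := by
    have hcomp : IsCompact ((closedBall (0:Z') (3*δ/4)) ×ˢ (sphere (0:ℂ) r)) :=
      (isCompact_closedBall _ _).prod (isCompact_sphere _ _)
    have hsub : ((closedBall (0:Z') (3*δ/4)) ×ˢ (sphere (0:ℂ) r)) ⊆ W := by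
      rintro ⟨z', w⟩ ⟨hz', hw⟩
      refine htube z' w ?_ ?_
      · have := mem_closedBall_iff_norm.1 hz'
        simp only [sub_zero] at this
        linarith
      · simpa [Complex.dist_eq] using hw
    exact hcomp.exists_bound_of_continuousOn (hF.continuousOn.mono hsub)
  have hM0 : 0 ≤ M := le_trans (norm_nonneg _)
      (hM (0, circleMap 0 r 0) ⟨mem_closedBall_self (by linarith), by
        simpa [Complex.dist_eq] using habsw 0⟩)
  -- the open region where everything is uniformly controlled
  set O : Set (Z' × ℂ) := ball (0:Z') (3*δ/4) ×ˢ ball (0:ℂ) (3*r/4) with hO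
  have hOopen : IsOpen O := isOpen_ball.prod isOpen_ball
  have hOfacts : ∀ x ∈ O, ‖x.1‖ < 3*δ/4 ∧ ‖x.2‖ < 3*r/4 := by
    rintro ⟨z', w⟩ ⟨h1, h2⟩
    constructor
    · simpa using mem_ball_iff_norm.1 h1
    · simpa using mem_ball_iff_norm.1 h2
  have hsubne : ∀ (θ : ℝ), ∀ x ∈ O, r/4 ≤ ‖circleMap 0 r θ - x.2‖ := by
    intro θ x hx
    have h2 := (hOfacts x hx).2
    have := norm_sub_norm_le (circleMap 0 r θ) x.2
    rw [habsw θ] at this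
    linarith
  have hsubne' : ∀ (θ : ℝ), ∀ x ∈ O, circleMap 0 r θ - x.2 ≠ 0 := by
    intro θ x hx
    intro h
    have := hsubne θ x hx
    rw [h, norm_zero] at this
    linarith
  -- the sliced integrand, for fixed angle, is holomorphic and bounded on `O`
  have hHdiff : ∀ θ : ℝ, DifferentiableOn ℂ
      (fun x : Z' × ℂ => (circleMap 0 r θ - x.2)⁻¹ • F (x.1, circleMap 0 r θ)) O := by
    intro θ x hx
    have h1 : DifferentiableAt ℂ (fun x : Z' × ℂ => (circleMap 0 r θ - x.2)⁻¹) x :=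
      ((differentiableAt_const _).sub differentiableAt_snd).inv (hsubne' θ x hx)
    have h2 : DifferentiableAt ℂ (fun x : Z' × ℂ => F (x.1, circleMap 0 r θ)) x := by
      have hmem : (x.1, circleMap 0 r θ) ∈ W :=
        htube _ _ (by linarith [(hOfacts x hx).1]) (habsw θ)
      exact (hF.differentiableAt (hW.mem_nhds hmem)).comp x
        (differentiableAt_fst.prodMk (differentiableAt_const _))
    exact (h1.smul h2).differentiableWithinAt
  have hHbound : ∀ θ : ℝ, ∀ x ∈ O,
      ‖(circleMap 0 r θ - x.2)⁻¹ • F (x.1, circleMap 0 r θ)‖ ≤ 4*M/r := by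
    intro θ x hx
    rw [norm_smul, norm_inv]
    have h1 : ‖F (x.1, circleMap 0 r θ)‖ ≤ M := by
      refine hM _ ⟨?_, ?_⟩
      · exact mem_closedBall_iff_norm.2 (by simpa using (hOfacts x hx).1.le)
      · simpa [Complex.dist_eq] using habsw θ
    have h2 := hsubne θ x hx
    have h3 : (0:ℝ) < ‖circleMap 0 r θ - x.2‖ := lt_of_lt_of_le (by linarith) h2
    calc ‖circleMap 0 r θ - x.2‖⁻¹ * ‖F (x.1, circleMap 0 r θ)‖
        ≤ (r/4)⁻¹ * M := by
          apply mul_le_mul _ h1 (norm_nonneg _) (by positivity)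
          exact inv_anti₀ (by linarith) h2
      _ = 4*M/r := by rw [inv_div]; ring
  refine ⟨G, ?_, ?_⟩
  · -- differentiability
    rintro y₀ hy₀
    obtain ⟨hy₁, hy₂⟩ : y₀.1 ∈ ball (0:Z') (δ/2) ∧ y₀.2 ∈ ball (0:ℂ) (r/2) :=
      ⟨(Set.mem_prod.1 hy₀).1, (Set.mem_prod.1 hy₀).2⟩
    have hy1 : ‖y₀.1‖ < δ/2 := by simpa using mem_ball_iff_norm.1 hy₁
    have hy2 : ‖y₀.2‖ < r/2 := by simpa using mem_ball_iff_norm.1 hy₂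
    set ε₀ : ℝ := min (δ/16) (r/16) with hε₀def
    have hε₀ : 0 < ε₀ := lt_min (by linarith) (by linarith)
    have hε₀δ : ε₀ ≤ δ/16 := min_le_left _ _
    have hε₀r : ε₀ ≤ r/16 := min_le_right _ _
    have hball_facts : ∀ x ∈ ball y₀ ε₀, ‖x.1 - y₀.1‖ < ε₀ ∧ ‖x.2 - y₀.2‖ < ε₀ := by
      intro x hx
      rw [mem_ball, Prod.dist_eq] at hx
      exact ⟨by rw [← dist_eq_norm]; exact (le_max_left _ _).trans_lt hx,
        by rw [← dist_eq_norm]; exact (le_max_right _ _).trans_lt hx⟩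
    have hballO : ∀ x ∈ ball y₀ ε₀, closedBall x ε₀ ⊆ O := by
      intro x hx z hz
      obtain ⟨h1, h2⟩ := hball_facts x hx
      rw [mem_closedBall, Prod.dist_eq] at hz
      have hz1 : ‖z.1 - x.1‖ ≤ ε₀ := by rw [← dist_eq_norm]; exact (le_max_left _ _).trans hz
      have hz2 : ‖z.2 - x.2‖ ≤ ε₀ := by rw [← dist_eq_norm]; exact (le_max_right _ _).trans hz
      have e1 : z.1 = (z.1 - x.1) + (x.1 - y₀.1) + y₀.1 := by abel
      have e2 : z.2 = (z.2 - x.2) + (x.2 - y₀.2) + y₀.2 := by abel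
      constructor
      · rw [mem_ball_iff_norm, sub_zero, e1]
        calc ‖(z.1 - x.1) + (x.1 - y₀.1) + y₀.1‖
            ≤ ‖z.1 - x.1‖ + ‖x.1 - y₀.1‖ + ‖y₀.1‖ := norm_add₃_le
          _ < 3*δ/4 := by linarith
      · rw [mem_ball_iff_norm, sub_zero, e2]
        calc ‖(z.2 - x.2) + (x.2 - y₀.2) + y₀.2‖
            ≤ ‖z.2 - x.2‖ + ‖x.2 - y₀.2‖ + ‖y₀.2‖ := norm_add₃_le
          _ < 3*r/4 := by linarith
    have hballsubO : ∀ x ∈ ball y₀ ε₀, x ∈ O :=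
      fun x hx => hballO x hx (mem_closedBall_self hε₀.le)
    have hmem_ball_bounds : ∀ x ∈ ball y₀ ε₀, ‖x.1‖ < δ ∧ ‖x.2‖ < r := by
      intro x hx
      obtain ⟨h1, h2⟩ := hball_facts x hx
      constructor
      · calc ‖x.1‖ = ‖(x.1 - y₀.1) + y₀.1‖ := by rw [sub_add_cancel]
          _ ≤ ‖x.1 - y₀.1‖ + ‖y₀.1‖ := norm_add_le _ _
          _ < δ := by linarith
      · calc ‖x.2‖ = ‖(x.2 - y₀.2) + y₀.2‖ := by rw [sub_add_cancel]
          _ ≤ ‖x.2 - y₀.2‖ + ‖y₀.2‖ := norm_add_le _ _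
          _ < r := by linarith
    -- uniform bound on the derivative in the parameter
    set C₁ : ℝ := (4*M/r) / ε₀ with hC₁def
    have hC₁0 : 0 ≤ C₁ := by positivity
    have hfdbound : ∀ θ : ℝ, ∀ x ∈ ball y₀ ε₀,
        ‖fderiv ℂ (fun x : Z' × ℂ =>
          (circleMap 0 r θ - x.2)⁻¹ • F (x.1, circleMap 0 r θ)) x‖ ≤ C₁ :=
      fun θ x hx => shiff_fderiv_bound hOopen (hHdiff θ) hε₀ (hballO x hx)
        (fun z hz => hHbound θ z (hballO x hx hz))
    set C₂ : ℝ := r * C₁ with hC₂def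
    have hC₂0 : 0 ≤ C₂ := by positivity
    set F' : ℝ → (Z' × ℂ) →L[ℂ] ℂ := fun θ =>
      deriv (circleMap 0 r) θ • fderiv ℂ (fun x : Z' × ℂ =>
        (circleMap 0 r θ - x.2)⁻¹ • F (x.1, circleMap 0 r θ)) y₀ with hF'def
    have hnormderiv : ∀ θ, ‖deriv (circleMap 0 r) θ‖ = r := by
      intro θ
      rw [deriv_circleMap, norm_mul, Complex.norm_I, mul_one]
      exact habsw θ
    have hFderivAt : ∀ θ : ℝ, ∀ x ∈ ball y₀ ε₀, HasFDerivAt (fun x => Fint x θ)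
        (deriv (circleMap 0 r) θ • fderiv ℂ (fun x : Z' × ℂ =>
          (circleMap 0 r θ - x.2)⁻¹ • F (x.1, circleMap 0 r θ)) x) x := by
      intro θ x hx
      exact (((hHdiff θ).differentiableAt
        (hOopen.mem_nhds (hballsubO x hx))).hasFDerivAt).fun_const_smul _
    have h_lip : ∀ θ : ℝ, LipschitzOnWith (Real.nnabs C₂) (fun x => Fint x θ) (ball y₀ ε₀) := by
      intro θ
      refine (convex_ball y₀ ε₀).lipschitzOnWith_of_nnnorm_hasFDerivWithin_le
        (fun x hx => (hFderivAt θ x hx).hasFDerivWithinAt) (fun x hx => ?_)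
      rw [← NNReal.coe_le_coe]
      have hb : ‖deriv (circleMap 0 r) θ • fderiv ℂ (fun x : Z' × ℂ =>
          (circleMap 0 r θ - x.2)⁻¹ • F (x.1, circleMap 0 r θ)) x‖ ≤ C₂ := by
        rw [norm_smul, hnormderiv θ, hC₂def]
        exact mul_le_mul_of_nonneg_left (hfdbound θ x hx) hr.le
      simpa [Real.coe_nnabs, abs_of_nonneg hC₂0] using hb
    -- continuity in the angle
    have hcont : ∀ x : Z' × ℂ, ‖x.1‖ < δ → ‖x.2‖ < r → Continuous (fun θ => Fint x θ) := by
      intro x h1 h2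
      have c1 : Continuous (deriv (circleMap 0 r)) := by
        have : (deriv (circleMap 0 r)) = fun θ => circleMap 0 r θ * Complex.I :=
          funext (deriv_circleMap 0 r)
        rw [this]
        exact (continuous_circleMap 0 r).mul continuous_const
      have c2 : Continuous fun θ => (circleMap 0 r θ - x.2)⁻¹ := by
        refine ((continuous_circleMap 0 r).sub continuous_const).inv₀ ?_
        intro θ
        refine sub_ne_zero.2 (fun heq => ?_)
        rw [show x.2 = circleMap 0 r θ from heq.symm, habsw θ] at h2
        exact lt_irrefl r h2
      have c3 : Continuous fun θ => F (x.1, circleMap 0 r θ) :=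
        hF.continuousOn.comp_continuous
          (continuous_const.prodMk (continuous_circleMap 0 r))
          (fun θ => htube _ _ h1 (habsw θ))
      exact c1.smul (c2.smul c3)
    have hF_meas : ∀ᶠ x in 𝓝 y₀, AEStronglyMeasurable (fun θ => Fint x θ) μ := by
      filter_upwards [ball_mem_nhds y₀ hε₀] with x hx
      obtain ⟨h1, h2⟩ := hmem_ball_bounds x hx
      exact (hcont x h1 h2).aestronglyMeasurable
    have hy₀1 : ‖y₀.1‖ < δ := by linarith
    have hy₀2 : ‖y₀.2‖ < r := by linarith
    have hF_int : Integrable (fun θ => Fint y₀ θ) μ := by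
      have h := (hcont y₀ hy₀1 hy₀2).integrableOn_Ioc (a := 0) (b := 2*π) (μ := volume)
      exact h
    -- measurability of the derivative family
    have hF'_meas : AEStronglyMeasurable F' μ := by
      refine (shiff_clm_measurable F' ?_).aestronglyMeasurable
      intro v
      set t₀ : ℝ := ε₀ / (2*(‖v‖+1)) with ht₀def
      have hv1 : (0:ℝ) < ‖v‖ + 1 := by positivity
      have ht₀ : 0 < t₀ := by positivity
      set tn : ℕ → ℝ := fun n => t₀ * ((n:ℝ)+1)⁻¹ with htndef
      have htn0 : ∀ n, 0 < tn n := fun n => by positivity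
      have htnle : ∀ n, tn n ≤ t₀ := by
        intro n
        rw [htndef]
        nth_rewrite 2 [← mul_one t₀]
        apply mul_le_mul_of_nonneg_left _ ht₀.le
        rw [inv_le_one_iff₀]
        right; push_cast; linarith [Nat.cast_nonneg (α := ℝ) n]
      have hmemn : ∀ n, y₀ + tn n • v ∈ ball y₀ ε₀ := by
        intro n
        rw [mem_ball, dist_self_add_left, norm_smul, Real.norm_eq_abs,
          abs_of_pos (htn0 n)]
        calc tn n * ‖v‖ ≤ t₀ * ‖v‖ :=
              mul_le_mul_of_nonneg_right (htnle n) (norm_nonneg v)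
          _ = ε₀ * (‖v‖ / (2*(‖v‖+1))) := by rw [ht₀def]; ring
          _ < ε₀ * 1 := by
              apply mul_lt_mul_of_pos_left _ hε₀
              rw [div_lt_one (by positivity)]
              linarith
          _ = ε₀ := mul_one _
      set Q : ℕ → ℝ → ℂ := fun n θ =>
        (tn n)⁻¹ • (Fint (y₀ + tn n • v) θ - Fint y₀ θ) with hQdef
      have hQmeas : ∀ n, Measurable (Q n) := by
        intro n
        obtain ⟨h1, h2⟩ := hmem_ball_bounds _ (hmemn n)
        exact (((hcont _ h1 h2).sub (hcont y₀ hy₀1 hy₀2)).const_smul ((tn n)⁻¹)).measurable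
      have htend : ∀ θ, Tendsto (fun n => Q n θ) atTop (𝓝 (F' θ v)) := by
        intro θ
        have hpath : HasDerivAt (fun t : ℝ => y₀ + t • v) v 0 := by
          simpa using ((hasDerivAt_id (0:ℝ)).smul_const v).const_add y₀
        have hFθ : HasFDerivAt (fun x => Fint x θ) (F' θ) y₀ :=
          hFderivAt θ y₀ (mem_ball_self hε₀)
        have hFθ' : HasFDerivAt (fun x => Fint x θ)
            ((F' θ).restrictScalars ℝ) (y₀ + (0:ℝ) • v) := by
          simpa using hFθ.restrictScalars ℝ
        have hγ : HasDerivAt (fun t : ℝ => Fint (y₀ + t • v) θ) (F' θ v) 0 := by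
          exact hFθ'.comp_hasDerivAt 0 hpath
        rw [hasDerivAt_iff_tendsto_slope] at hγ
        have hseq : Tendsto tn atTop (𝓝[≠] (0:ℝ)) := by
          apply tendsto_nhdsWithin_of_tendsto_nhds_of_eventually_within
          · have h0 := tendsto_one_div_add_atTop_nhds_zero_nat (𝕜 := ℝ)
            have h1 := h0.const_mul t₀
            rw [mul_zero] at h1
            refine h1.congr (fun n => ?_)
            rw [htndef, one_div]
          · exact Eventually.of_forall fun n => (htn0 n).ne'
        refine (hγ.comp hseq).congr (fun n => ?_)
        rw [Function.comp_apply, slope_def_module]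
        rw [hQdef]
        simp
      exact measurable_of_tendsto_metrizable hQmeas (tendsto_pi_nhds.2 htend)
    -- differentiate under the integral sign
    obtain ⟨-, hHasF⟩ := hasFDerivAt_integral_of_dominated_loc_of_lip
      (μ := μ) (𝕜 := ℂ) (bound := fun _ => C₂) (ball_mem_nhds y₀ hε₀) hF_meas hF_int hF'_meas
      (Eventually.of_forall h_lip) (integrable_const C₂)
      (Eventually.of_forall (fun θ => hFderivAt θ y₀ (mem_ball_self hε₀)))
    have hGrepr : G = fun x => (2 * π * Complex.I : ℂ)⁻¹ • ∫ θ, Fint x θ ∂μ := by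
      funext x
      rw [hG]
      simp only
      congr 1
      rw [circleIntegral, intervalIntegral.integral_of_le (by positivity : (0:ℝ) ≤ 2*π)]
    rw [hGrepr]
    exact ((hHasF.differentiableAt).fun_const_smul _).differentiableWithinAt
  · -- the identity on good fibers
    rintro y hy hgood
    obtain ⟨hy₁, hy₂⟩ : y.1 ∈ ball (0:Z') (δ/2) ∧ y.2 ∈ ball (0:ℂ) (r/2) :=
      ⟨(Set.mem_prod.1 hy).1, (Set.mem_prod.1 hy).2⟩
    have hy2 : ‖y.2‖ < r/2 := by simpa using mem_ball_iff_norm.1 hy₂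
    have haff : Continuous (fun w : ℂ => ((y.1, w) : Z' × ℂ)) :=
      continuous_const.prodMk continuous_id
    have hDCC : DiffContOnCl ℂ (fun w => F (y.1, w)) (ball (0:ℂ) r) := by
      constructor
      · intro w hw
        have hmem : (y.1, w) ∈ W := hgood w (by simpa using (mem_ball_iff_norm.1 hw).le)
        exact ((hF.differentiableAt (hW.mem_nhds hmem)).comp w
          ((differentiableAt_const _).prodMk differentiableAt_id)).differentiableWithinAt
      · rw [closure_ball (0:ℂ) hr.ne']
        refine hF.continuousOn.comp haff.continuousOn ?_
        intro w hw
        exact hgood w (by simpa using mem_closedBall_iff_norm.1 hw)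
    have hkey := hDCC.circleIntegral_sub_inv_smul
      (w := y.2) (mem_ball_iff_norm.2 (by simpa using hy2.trans_le (by linarith)))
    rw [hG]
    simp only
    rw [hkey, smul_smul, inv_mul_cancel₀ Complex.two_pi_I_ne_zero, one_smul]

end Core

/-- Splitting off the `0`-th coordinate of `ℂ^(m+2)` as a continuous linear equivalence. -/
noncomputable def shiffEquiv (m : ℕ) :
    EuclideanSpace ℂ (Fin (m+2)) ≃L[ℂ] (EuclideanSpace ℂ (Fin (m+1)) × ℂ) :=
  LinearEquiv.toContinuousLinearEquiv
  { toFun := fun x => (WithLp.toLp 2 (fun i : Fin (m+1) => x i.succ), x 0)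
    invFun := fun y => WithLp.toLp 2 (Fin.cons y.2 y.1 : Fin (m+2) → ℂ)
    map_add' := fun x y => rfl
    map_smul' := fun c x => rfl
    left_inv := fun x => by
      ext i
      refine Fin.cases ?_ (fun j => ?_) i
      · show (Fin.cons (x 0) (fun i : Fin (m+1) => x i.succ) : Fin (m+2) → ℂ) 0 = x 0
        exact Fin.cons_zero _ _
      · show (Fin.cons (x 0) (fun i : Fin (m+1) => x i.succ) : Fin (m+2) → ℂ) j.succ = x j.succ
        exact Fin.cons_succ _ _ _
    right_inv := fun y => by
      refine Prod.ext ?_ ?_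
      · ext i
        show (Fin.cons y.2 y.1 : Fin (m+2) → ℂ) i.succ = y.1 i
        exact Fin.cons_succ _ _ _
      · show (Fin.cons y.2 y.1 : Fin (m+2) → ℂ) 0 = y.2
        exact Fin.cons_zero _ _ }

/-- Local holomorphic extension across a relatively closed `H^(2m+2)`-null set in `ℂ^(m+2)`. -/
lemma shiff_local (m : ℕ) (D : Set (EuclideanSpace ℂ (Fin (m+2)))) (hD : IsOpen D)
    (E : Set (EuclideanSpace ℂ (Fin (m+2)))) (hED : E ⊆ D)
    (hE : μH[(2*((m:ℝ)+1))] E = 0)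
    (f : EuclideanSpace ℂ (Fin (m+2)) → ℂ) (hf : DifferentiableOn ℂ f (D \ E))
    (hDEopen : IsOpen (D \ E))
    (p : EuclideanSpace ℂ (Fin (m+2))) (hp : p ∈ E) :
    ∃ U g, IsOpen U ∧ p ∈ U ∧ U ⊆ D ∧ DifferentiableOn ℂ g U ∧ Set.EqOn g f (U \ E) := by
  classical
  set X' := EuclideanSpace ℂ (Fin (m+1))
  set e := shiffEquiv m with he
  have hd0 : (0:ℝ) ≤ 2*((m:ℝ)+1) := by positivity
  -- transport the null set through `e`
  have heA : μH[(2*((m:ℝ)+1))] ((⇑e) '' E) = 0 := by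
    refine shiff_image_null hd0 _ (fun a _ => ?_) hE
    refine ⟨‖(e : EuclideanSpace ℂ (Fin (m+2)) →L[ℂ] (X' × ℂ))‖₊, Set.univ,
      Filter.univ_mem, fun x _ y _ => ?_⟩
    exact (e : EuclideanSpace ℂ (Fin (m+2)) →L[ℂ] (X' × ℂ)).lipschitz x y
  set p' : X' × ℂ := e p with hp'
  set A : Set (X' × ℂ) := ((⇑e) '' E) ∩ {y | y.2 ≠ p'.2} with hA
  set β : X' × ℂ → X' := fun y => (y.2 - p'.2)⁻¹ • (y.1 - p'.1) with hβ
  have hAnull : μH[(2*((m:ℝ)+1))] A = 0 :=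
    measure_mono_null Set.inter_subset_left heA
  have hBnull : μH[(2*((m:ℝ)+1))] (β '' A) = 0 := by
    refine shiff_image_null hd0 β (fun a ha => ?_) hAnull
    have ha2 : a.2 - p'.2 ≠ 0 := sub_ne_zero.2 ha.2
    have hcd : ContDiffAt ℂ 1 β a := by
      refine ContDiffAt.fun_smul ?_ ?_
      · exact ((contDiffAt_snd.sub contDiffAt_const).inv ha2)
      · exact contDiffAt_fst.sub contDiffAt_const
    exact hcd.exists_lipschitzOnWith
  -- choose a direction outside the bad set
  obtain ⟨c, hc⟩ : ∃ c : X', c ∉ β '' A := by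
    by_contra h
    push_neg at h
    have huniv : β '' A = Set.univ := Set.eq_univ_of_forall h
    have := shiff_interior_empty (n := m+1) (by push_cast; ring_nf; exact le_rfl) hBnull
    rw [huniv, interior_univ] at this
    exact (Set.univ_nonempty).ne_empty this
  -- skew coordinates
  set ψ : EuclideanSpace ℂ (Fin (m+2)) → X' × ℂ :=
    fun x => ((e x).1 - p'.1 - ((e x).2 - p'.2) • c, (e x).2 - p'.2) with hψ
  set ψinv : (X' × ℂ) → EuclideanSpace ℂ (Fin (m+2)) :=
    fun y => e.symm (p'.1 + y.1 + y.2 • c, p'.2 + y.2) with hψinv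
  have hψinvψ : ∀ x, ψinv (ψ x) = x := by
    intro x
    simp only [hψ, hψinv]
    have h1 : ((p'.1 + ((e x).1 - p'.1 - ((e x).2 - p'.2) • c) + ((e x).2 - p'.2) • c,
        p'.2 + ((e x).2 - p'.2)) : X' × ℂ) = e x := by
      refine Prod.ext ?_ ?_
      · simp only; abel
      · simp only; abel
    rw [h1, ContinuousLinearEquiv.symm_apply_apply]
  have hψψinv : ∀ y, ψ (ψinv y) = y := by
    intro y
    simp only [hψ, hψinv, ContinuousLinearEquiv.apply_symm_apply]
    refine Prod.ext ?_ ?_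
    · simp only [add_sub_cancel_left]
      abel
    · simp only [add_sub_cancel_left]
  have he_d : Differentiable ℂ (fun x => e x) :=
    (e : EuclideanSpace ℂ (Fin (m+2)) →L[ℂ] (X' × ℂ)).differentiable
  have hψdiff : Differentiable ℂ ψ :=
    ((he_d.fst.sub_const _).sub ((he_d.snd.sub_const _).smul_const c)).prodMk
      (he_d.snd.sub_const _)
  have hψinvdiff : Differentiable ℂ ψinv := by
    refine ((e.symm : (X' × ℂ) →L[ℂ] EuclideanSpace ℂ (Fin (m+2))).differentiable).comp ?_
    exact ((differentiable_fst.const_add _).add (differentiable_snd.smul_const c)).prodMk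
      (differentiable_snd.const_add _)
  -- preimage sets
  set W : Set (X' × ℂ) := ψinv ⁻¹' (D \ E) with hWdef
  have hWopen : IsOpen W := hDEopen.preimage hψinvdiff.continuous
  set Ω₀ : Set (X' × ℂ) := ψinv ⁻¹' D with hΩ₀def
  have hΩ₀open : IsOpen Ω₀ := hD.preimage hψinvdiff.continuous
  set F : (X' × ℂ) → ℂ := fun y => f (ψinv y) with hFdef
  have hFdiff : DifferentiableOn ℂ F W := by
    intro y hy
    exact ((hf.differentiableAt (hDEopen.mem_nhds hy)).comp y
      (hψinvdiff y)).differentiableWithinAt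
  have hψp : ψ p = 0 := by
    simp only [hψ, ← hp']
    refine Prod.ext ?_ ?_ <;> simp
  have hline : ∀ lam : ℂ, lam ≠ 0 → ψinv ((0:X'), lam) ∉ E := by
    intro lam hlam hmem
    apply hc
    refine ⟨e (ψinv ((0:X'), lam)), ⟨Set.mem_image_of_mem _ hmem, ?_⟩, ?_⟩
    · simp only [hψinv, ContinuousLinearEquiv.apply_symm_apply]
      simpa using hlam
    · simp only [hβ, hψinv, ContinuousLinearEquiv.apply_symm_apply]
      simp [add_sub_cancel_left, smul_smul, inv_mul_cancel₀ hlam]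
  have hγcont : Continuous (fun lam : ℂ => ψinv ((0:X'), lam)) :=
    hψinvdiff.continuous.comp (continuous_const.prodMk continuous_id)
  have hγ0 : ψinv ((0:X'), 0) = p := by
    rw [Prod.mk_zero_zero, ← hψp, hψinvψ]
  have hpre : (fun lam : ℂ => ψinv ((0:X'), lam)) ⁻¹' D ∈ 𝓝 (0:ℂ) := by
    apply hγcont.continuousAt.preimage_mem_nhds
    rw [hγ0]
    exact hD.mem_nhds (hED hp)
  obtain ⟨r, hr0, hrball⟩ := Metric.nhds_basis_closedBall.mem_iff.1 hpre
  have hdiscD : ∀ lam : ℂ, ‖lam‖ ≤ r → ψinv ((0:X'), lam) ∈ D := by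
    intro lam h
    exact hrball (by rwa [mem_closedBall, dist_zero_right])
  have hΓW : ∀ lam : ℂ, ‖lam‖ = r → (((0:X'), lam) : X' × ℂ) ∈ W := by
    intro lam h
    have hlam0 : lam ≠ 0 := by
      intro h0
      rw [h0, norm_zero] at h
      exact hr0.ne h
    exact ⟨hdiscD lam h.le, hline lam hlam0⟩
  -- tube radii via compactness
  set Γ : Set (X' × ℂ) := (fun lam : ℂ => (((0:X'), lam) : X' × ℂ)) '' sphere 0 r with hΓdef
  have hΓcomp : IsCompact Γ :=
    (isCompact_sphere _ _).image (continuous_const.prodMk continuous_id)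
  have hΓsubW : Γ ⊆ W := by
    rintro _ ⟨lam, hlam, rfl⟩
    exact hΓW lam (by rwa [mem_sphere, dist_zero_right] at hlam)
  obtain ⟨η₁, hη₁pos, hη₁⟩ := hΓcomp.exists_cthickening_subset_open hWopen hΓsubW
  set K' : Set (X' × ℂ) := (fun lam : ℂ => (((0:X'), lam) : X' × ℂ)) '' closedBall 0 r with hK'def
  have hK'comp : IsCompact K' :=
    (isCompact_closedBall _ _).image (continuous_const.prodMk continuous_id)
  have hK'sub : K' ⊆ Ω₀ := by
    rintro _ ⟨lam, hlam, rfl⟩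
    exact hdiscD lam (by rwa [mem_closedBall, dist_zero_right] at hlam)
  obtain ⟨η₂, hη₂pos, hη₂⟩ := hK'comp.exists_cthickening_subset_open hΩ₀open hK'sub
  set δ : ℝ := min η₁ η₂ with hδdef
  have hδpos : 0 < δ := lt_min hη₁pos hη₂pos
  have hdistp : ∀ (z' : X') (w : ℂ), dist ((z', w) : X' × ℂ) ((0:X'), w) = ‖z'‖ := by
    intro z' w
    rw [Prod.dist_eq, dist_self, dist_zero_right]
    exact max_eq_left (norm_nonneg _)
  have htube : ∀ z' : X', ∀ w : ℂ, ‖z'‖ < δ → ‖w‖ = r → ((z', w) : X' × ℂ) ∈ W := by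
    intro z' w h1 h2
    apply hη₁
    apply mem_cthickening_of_dist_le ((z', w) : X' × ℂ) (((0:X'), w)) _ _ ?_ ?_
    · exact ⟨w, by rwa [mem_sphere, dist_zero_right], rfl⟩
    · rw [hdistp]
      exact le_trans h1.le (le_trans (min_le_left _ _) le_rfl)
  have hdisc : ∀ z' : X', ∀ w : ℂ, ‖z'‖ < δ → ‖w‖ ≤ r → ((z', w) : X' × ℂ) ∈ Ω₀ := by
    intro z' w h1 h2
    apply hη₂
    apply mem_cthickening_of_dist_le ((z', w) : X' × ℂ) (((0:X'), w)) _ _ ?_ ?_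
    · exact ⟨w, by rwa [mem_closedBall, dist_zero_right], rfl⟩
    · rw [hdistp]
      exact le_trans h1.le (le_trans (min_le_right _ _) le_rfl)
  -- apply the core construction
  obtain ⟨G, hGdiff, hGid⟩ := shiff_core hWopen hFdiff hr0 hδpos htube
  set P : Set (X' × ℂ) := ball (0:X') (δ/2) ×ˢ ball (0:ℂ) (r/2) with hPdef
  have hPopen : IsOpen P := isOpen_ball.prod isOpen_ball
  have hPfacts : ∀ y : X' × ℂ, y ∈ P → ‖y.1‖ < δ/2 ∧ ‖y.2‖ < r/2 := by
    rintro ⟨z', w⟩ ⟨h1, h2⟩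
    exact ⟨by simpa using mem_ball_iff_norm.1 h1, by simpa using mem_ball_iff_norm.1 h2⟩
  have hPsubΩ₀ : P ⊆ Ω₀ := by
    intro y hy
    obtain ⟨h1, h2⟩ := hPfacts y hy
    have := hdisc y.1 y.2 (by linarith) (by linarith)
    simpa using this
  set Ehat : Set (X' × ℂ) := ψinv ⁻¹' E with hEhatdef
  -- the bad projection set is null, hence has empty interior
  have hbadnull : μH[(2*((m:ℝ)+1))] ((fun x => (ψ x).1) '' E) = 0 := by
    refine shiff_image_null hd0 _ (fun a _ => ?_) hE
    have hcd : ContDiff ℂ 1 (fun x : EuclideanSpace ℂ (Fin (m+2)) => (ψ x).1) := by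
      have he_cd : ContDiff ℂ 1 (fun x : EuclideanSpace ℂ (Fin (m+2)) => e x) :=
        (e : EuclideanSpace ℂ (Fin (m+2)) →L[ℂ] (X' × ℂ)).contDiff
      exact (he_cd.fst.sub contDiff_const).sub
        ((he_cd.snd.sub contDiff_const).smul contDiff_const)
    exact hcd.contDiffAt.exists_lipschitzOnWith
  have hbadint : interior ((fun x => (ψ x).1) '' E) = ∅ :=
    shiff_interior_empty (n := m+1) (by push_cast; ring_nf; exact le_rfl) hbadnull
  have hgood_dense : ∀ (z'₀ : X') (ε : ℝ), 0 < ε →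
      ∃ z' : X', dist z' z'₀ < ε ∧ ∀ w : ℂ, ‖w‖ ≤ r → ((z', w) : X' × ℂ) ∉ Ehat := by
    intro z'₀ ε hε
    by_contra hcon
    push_neg at hcon
    have hsub : ball z'₀ ε ⊆ (fun x => (ψ x).1) '' E := by
      intro z' hz'
      obtain ⟨w, hw, hmem⟩ := hcon z' (mem_ball.1 hz')
      refine ⟨ψinv (z', w), hmem, ?_⟩
      show (ψ (ψinv (z', w))).1 = z'
      rw [hψψinv]
    have h1 : ball z'₀ ε ⊆ interior ((fun x => (ψ x).1) '' E) :=
      interior_maximal hsub isOpen_ball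
    rw [hbadint] at h1
    exact (nonempty_ball.2 hε).ne_empty (Set.subset_empty_iff.1 h1)
  have hT : P ∩ W = P \ Ehat := by
    ext y
    constructor
    · rintro ⟨h1, h2⟩
      exact ⟨h1, h2.2⟩
    · rintro ⟨h1, h2⟩
      exact ⟨h1, hPsubΩ₀ h1, h2⟩
  -- equality of `G` and `F` on `P \ Ehat` by density of good fibers
  have hEq : Set.EqOn G F (P \ Ehat) := by
    set s : Set (X' × ℂ) := {y | (y ∈ P \ Ehat) ∧
      ∀ w : ℂ, ‖w‖ ≤ r → ((y.1, w) : X' × ℂ) ∉ Ehat} with hsdef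
    have hEqs : Set.EqOn G F s := by
      rintro y ⟨⟨hyP, _⟩, hygood⟩
      refine hGid y hyP (fun w hw => ?_)
      have hD' : ((y.1, w) : X' × ℂ) ∈ Ω₀ :=
        hdisc y.1 w (by linarith [(hPfacts y hyP).1]) hw
      exact ⟨hD', hygood w hw⟩
    have hsub_st : s ⊆ P \ Ehat := fun y hy => hy.1
    have hclosure : P \ Ehat ⊆ closure s := by
      intro y hy
      rw [_root_.mem_closure_iff]
      intro O hO hyO
      have hyT : y ∈ O ∩ (P ∩ W) := ⟨hyO, by rw [hT]; exact hy⟩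
      obtain ⟨ε, hεpos, hεball⟩ := Metric.isOpen_iff.1 (hO.inter (hPopen.inter hWopen)) y hyT
      obtain ⟨z', hz'dist, hz'good⟩ := hgood_dense y.1 ε hεpos
      set z : X' × ℂ := (z', y.2) with hzdef
      have hzball : z ∈ ball y ε := by
        rw [mem_ball, hzdef, Prod.dist_eq]
        simp only [dist_self]
        rw [max_eq_left dist_nonneg]
        exact hz'dist
      have hzO := hεball hzball
      refine ⟨z, hzO.1, ?_⟩
      refine ⟨?_, fun w hw => hz'good w hw⟩
      rw [← hT]
      exact hzO.2
    have hGcont : ContinuousOn G (P \ Ehat) := by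
      refine hGdiff.continuousOn.mono ?_
      exact fun y hy => hy.1
    have hFcont : ContinuousOn F (P \ Ehat) := by
      have h1 : ContinuousOn F W :=
        hf.continuousOn.comp hψinvdiff.continuous.continuousOn (fun y hy => hy)
      refine h1.mono ?_
      rw [← hT]
      exact Set.inter_subset_right
    exact Set.EqOn.of_subset_closure hEqs hGcont hFcont hsub_st hclosure
  -- assemble
  refine ⟨ψ ⁻¹' P, fun x => G (ψ x), hPopen.preimage hψdiff.continuous, ?_, ?_, ?_, ?_⟩
  · rw [Set.mem_preimage, hψp]
    exact ⟨mem_ball_self (by linarith), mem_ball_self (by linarith)⟩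
  · intro x hx
    have h1 := hPsubΩ₀ hx
    rwa [hΩ₀def, Set.mem_preimage, hψinvψ] at h1
  · intro x hx
    exact ((hGdiff.differentiableAt (hPopen.mem_nhds hx)).comp x
      (hψdiff x)).differentiableWithinAt
  · intro x hx
    obtain ⟨hxU, hxE⟩ := hx
    have h1 : ψ x ∈ P \ Ehat := by
      refine ⟨hxU, ?_⟩
      rw [hEhatdef, Set.mem_preimage, hψinvψ]
      exact hxE
    have h2 := hEq h1
    rw [hFdef] at h2
    simp only [hψinvψ] at h2
    exact h2

/- Shiffman-type removability: if `D ⊆ ℂ^N` is open, `E ⊆ D` is relatively closed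
in `D` with `H^(2N-2)(E) = 0` (Euclidean Hausdorff measure on `ℂ^N ≅ ℝ^(2N)`),
then every function holomorphic on `D \ E` extends holomorphically to `D`. -/
theorem stmt_9 (N : ℕ) (hN : 1 ≤ N) (D : Set (EuclideanSpace ℂ (Fin N))) (hD : IsOpen D)
    (E : Set (EuclideanSpace ℂ (Fin N))) (hED : E ⊆ D) (hEclosed : closure E ∩ D ⊆ E)
    (hE : μH[2 * (N : ℝ) - 2] E = 0)
    (f : EuclideanSpace ℂ (Fin N) → ℂ) (hf : DifferentiableOn ℂ f (D \ E)) :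
    ∃ g : EuclideanSpace ℂ (Fin N) → ℂ,
      DifferentiableOn ℂ g D ∧ Set.EqOn g f (D \ E) := by
  classical
  rcases N with _ | _ | m
  · exact absurd hN (by norm_num)
  · -- one variable: `E` is empty
    have h0 : (2 * ((1:ℕ) : ℝ) - 2) = 0 := by norm_num
    rw [h0] at hE
    have hEempty : E = ∅ := by
      by_contra h
      obtain ⟨x, hx⟩ := Set.nonempty_iff_ne_empty.2 h
      have h1 : μH[(0:ℝ)] ({x} : Set (EuclideanSpace ℂ (Fin 1))) ≤ μH[(0:ℝ)] E :=
        measure_mono (Set.singleton_subset_iff.2 hx)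
      rw [Measure.hausdorffMeasure_zero_singleton, hE] at h1
      exact (lt_irrefl (0:ℝ≥0∞)) (lt_of_lt_of_le (by norm_num) h1)
    refine ⟨f, ?_, fun x _ => rfl⟩
    rwa [hEempty, Set.diff_empty] at hf
  · -- the main case `N = m + 2`
    have hE' : μH[(2*((m:ℝ)+1))] E = 0 := by
      have hcast : (2*((m:ℝ)+1)) = 2 * ((m+1+1 : ℕ) : ℝ) - 2 := by push_cast; ring
      rw [hcast]
      exact hE
    have hDEopen : IsOpen (D \ E) := by
      have hrw : D \ E = D ∩ (closure E)ᶜ := by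
        ext z
        constructor
        · rintro ⟨h1, h2⟩
          exact ⟨h1, fun hcl => h2 (hEclosed ⟨hcl, h1⟩)⟩
        · rintro ⟨h1, h2⟩
          exact ⟨h1, fun he => h2 (subset_closure he)⟩
      rw [hrw]
      exact hD.inter isClosed_closure.isOpen_compl
    have hEint : interior E = ∅ := by
      refine shiff_interior_empty (n := m+2) (d := 2*((m:ℝ)+1)) ?_ hE'
      push_cast
      linarith
    have hloc := fun p hp => shiff_local m D hD E hED hE' f hf hDEopen p hp
    choose U g hUopen hpU hUD hgdiff hgeq using hloc
    -- uniqueness of holomorphic extensions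
    have huniq : ∀ (V : Set (EuclideanSpace ℂ (Fin (m+2)))), IsOpen V →
        ∀ g₁ g₂ : EuclideanSpace ℂ (Fin (m+2)) → ℂ, ContinuousOn g₁ V → ContinuousOn g₂ V →
        Set.EqOn g₁ f (V \ E) → Set.EqOn g₂ f (V \ E) → Set.EqOn g₁ g₂ V := by
      intro V hV g₁ g₂ h₁ h₂ he₁ he₂
      have hsubcl : V ⊆ closure (V \ E) := by
        intro z hz
        rw [_root_.mem_closure_iff]
        intro O hO hzO
        have hOV : IsOpen (O ∩ V) := hO.inter hV
        have hnot : ¬ (O ∩ V ⊆ E) := by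
          intro hsub
          have h3 := interior_maximal hsub hOV
          rw [hEint] at h3
          have hne : (O ∩ V).Nonempty := ⟨z, hzO, hz⟩
          exact hne.ne_empty (Set.subset_empty_iff.1 h3)
        obtain ⟨a, ha, haE⟩ := Set.not_subset.1 hnot
        exact ⟨a, ha.1, ha.2, haE⟩
      have heq : Set.EqOn g₁ g₂ (V \ E) := fun z hz => (he₁ hz).trans (he₂ hz).symm
      exact Set.EqOn.of_subset_closure heq h₁ h₂ Set.diff_subset hsubcl
    refine ⟨fun z => if hz : z ∈ E then g z hz z else f z, ?_, ?_⟩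
    · intro q hq
      by_cases hqE : q ∈ E
      · have hEqOn : Set.EqOn (fun z => if hz : z ∈ E then g z hz z else f z)
            (g q hqE) (U q hqE ∩ D) := by
          intro z hz
          by_cases hzE : z ∈ E
          · simp only [dif_pos hzE]
            have hVopen : IsOpen (U z hzE ∩ U q hqE) :=
              (hUopen _ _).inter (hUopen _ _)
            have h4 := huniq _ hVopen (g z hzE) (g q hqE)
              ((hgdiff _ _).continuousOn.mono Set.inter_subset_left)
              ((hgdiff _ _).continuousOn.mono Set.inter_subset_right)
              (fun y hy => hgeq z hzE ⟨hy.1.1, hy.2⟩)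
              (fun y hy => hgeq q hqE ⟨hy.1.2, hy.2⟩)
            exact h4 ⟨hpU z hzE, hz.1⟩
          · simp only [dif_neg hzE]
            exact (hgeq q hqE ⟨hz.1, hzE⟩).symm
        have hmem : U q hqE ∩ D ∈ 𝓝 q :=
          ((hUopen q hqE).inter hD).mem_nhds ⟨hpU q hqE, hq⟩
        have hdiff : DifferentiableAt ℂ (g q hqE) q :=
          (hgdiff q hqE).differentiableAt ((hUopen q hqE).mem_nhds (hpU q hqE))
        exact (hdiff.congr_of_eventuallyEq
          (Filter.eventuallyEq_of_mem hmem hEqOn)).differentiableWithinAt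
      · have hmem : (D \ E) ∈ 𝓝 q := hDEopen.mem_nhds ⟨hq, hqE⟩
        have hdiff : DifferentiableAt ℂ f q := hf.differentiableAt hmem
        have hEqOn : Set.EqOn (fun z => if hz : z ∈ E then g z hz z else f z) f (D \ E) :=
          fun z hz => by simp only [dif_neg hz.2]
        exact (hdiff.congr_of_eventuallyEq
          (Filter.eventuallyEq_of_mem hmem hEqOn)).differentiableWithinAt
    · intro z hz
      simp only [dif_neg hz.2]
end
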